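/- Let u₀, 𝒜, 𝐦 ∈ ℝ, ε ∈ (0, 1) and r₀ > 0. Suppose u, f : [r₀, ∞) → ℝ are twice differentiable with u(r) = 1 + u₀/r + O(r^{−2+ε}), u′(r) = −u₀/r² + O(r^{−3+ε}), f′(r) = r/√(1 + r²) + 𝒜/r + O(r^{−2+ε}), f″(r) = (1 + r²)^{−3/2} − 𝒜/r² + O(r^{−3+ε}) as r → ∞; suppose V : [r₀, ∞) → ℝ satisfies V(r) = O(r^{ε}); suppose G(r) = (1 + r²) − 𝐦/r + O(r^{−2}) and k(r) = (1 + r²)^{−1} + O(r^{−5}) as r → ∞. Define D(r) = [1 + u(r)²((1 + r²) f′(r)² + V(r))]^{1/2} and π(r) = [u(r)(f″(r) + (r/(1 + r²)) f′(r)) + 2 u′(r) f′(r)] / D(r). Then u(r) G(r) f′(r) √(1 + r²) D(r)^{−1} (π(r) − k(r)) = −(2u₀ + 𝒜)/r + O(r^{−2+ε}) as r → ∞. -/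

import Mathlib

open Filter Real

private def Ob (F : ℝ → ℝ) (p : ℝ) : Prop :=
  ∃ c : ℝ, ∀ᶠ r : ℝ in atTop, |F r| ≤ c * r ^ p

private lemma Ob.bound {F : ℝ → ℝ} {p : ℝ} (h : Ob F p) :
    ∃ c : ℝ, 0 ≤ c ∧ ∀ᶠ r : ℝ in atTop, |F r| ≤ c * r ^ p := by
  obtain ⟨c, hc⟩ := h
  refine ⟨max c 0, le_max_right _ _, ?_⟩
  filter_upwards [hc, eventually_gt_atTop (0:ℝ)] with r h1 hr
  exact h1.trans (mul_le_mul_of_nonneg_right (le_max_left _ _) (Real.rpow_nonneg hr.le p))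

private lemma Ob.congr {F G : ℝ → ℝ} {p : ℝ} (h : Ob F p)
    (hFG : ∀ᶠ r : ℝ in atTop, F r = G r) : Ob G p := by
  obtain ⟨c, hc⟩ := h
  exact ⟨c, by filter_upwards [hc, hFG] with r h1 h2; rwa [← h2]⟩

private lemma Ob.add {F G : ℝ → ℝ} {p : ℝ} (hF : Ob F p) (hG : Ob G p) :
    Ob (fun r => F r + G r) p := by
  obtain ⟨c, hc⟩ := hF; obtain ⟨d, hd⟩ := hG
  refine ⟨c + d, ?_⟩
  filter_upwards [hc, hd] with r h1 h2
  calc |F r + G r| ≤ |F r| + |G r| := abs_add_le _ _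
    _ ≤ c * r ^ p + d * r ^ p := add_le_add h1 h2
    _ = (c + d) * r ^ p := by ring

private lemma Ob.neg {F : ℝ → ℝ} {p : ℝ} (hF : Ob F p) : Ob (fun r => -F r) p := by
  obtain ⟨c, hc⟩ := hF
  exact ⟨c, by filter_upwards [hc] with r h1; rwa [abs_neg]⟩

private lemma Ob.sub {F G : ℝ → ℝ} {p : ℝ} (hF : Ob F p) (hG : Ob G p) :
    Ob (fun r => F r - G r) p := by
  have := hF.add hG.neg
  exact this.congr (Eventually.of_forall fun r => by ring)

private lemma Ob.mul {F G : ℝ → ℝ} {p q : ℝ} (hF : Ob F p) (hG : Ob G q) :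
    Ob (fun r => F r * G r) (p + q) := by
  obtain ⟨c, hc0, hc⟩ := hF.bound; obtain ⟨d, hd0, hd⟩ := hG.bound
  refine ⟨c * d, ?_⟩
  filter_upwards [hc, hd, eventually_gt_atTop (0:ℝ)] with r h1 h2 hr
  rw [abs_mul, Real.rpow_add hr]
  calc |F r| * |G r| ≤ (c * r ^ p) * (d * r ^ q) :=
        mul_le_mul h1 h2 (abs_nonneg _) (le_trans (abs_nonneg _) h1)
    _ = c * d * (r ^ p * r ^ q) := by ring

private lemma Ob.mono {F : ℝ → ℝ} {p q : ℝ} (hF : Ob F p) (hpq : p ≤ q) : Ob F q := by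
  obtain ⟨c, hc0, hc⟩ := hF.bound
  refine ⟨c, ?_⟩
  filter_upwards [hc, eventually_ge_atTop (1:ℝ)] with r h1 hr
  exact h1.trans (mul_le_mul_of_nonneg_left (Real.rpow_le_rpow_of_exponent_le hr hpq) hc0)

private lemma Ob.const (c : ℝ) : Ob (fun _ => c) 0 := by
  refine ⟨|c|, ?_⟩
  filter_upwards [eventually_gt_atTop (0:ℝ)] with r hr
  rw [Real.rpow_zero, mul_one]

private lemma Ob.div {F E : ℝ → ℝ} {p : ℝ} (hF : Ob F (p + 1))
    (hE : ∀ᶠ r : ℝ in atTop, r / 2 ≤ E r) :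
    Ob (fun r => F r / E r) p := by
  obtain ⟨c, hc0, hc⟩ := hF.bound
  refine ⟨2 * c, ?_⟩
  filter_upwards [hc, hE, eventually_gt_atTop (0:ℝ)] with r h1 h2 hr
  have hE0 : 0 < E r := lt_of_lt_of_le (by linarith) h2
  rw [abs_div, abs_of_pos hE0]
  have h3 : |F r| / E r ≤ (c * r ^ (p + 1)) / (r / 2) :=
    div_le_div₀ (by positivity) h1 (by linarith) h2
  refine h3.trans (le_of_eq ?_)
  rw [Real.rpow_add hr, Real.rpow_one]
  field_simp

private lemma rpow_neg_nat {r : ℝ} (hr : 0 < r) (n : ℕ) :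
    r ^ (-(n : ℝ)) = (r ^ n)⁻¹ := by
  rw [Real.rpow_neg hr.le, Real.rpow_natCast]

private lemma Ob.cdivpow (c : ℝ) (n : ℕ) : Ob (fun r => c / r ^ n) (-(n : ℝ)) := by
  refine ⟨|c|, ?_⟩
  filter_upwards [eventually_gt_atTop (0:ℝ)] with r hr
  rw [abs_div, abs_pow, abs_of_pos hr, rpow_neg_nat hr, div_eq_mul_inv]

private lemma Ob.monomial (n : ℕ) : Ob (fun r : ℝ => r ^ n) (n : ℝ) := by
  refine ⟨1, ?_⟩
  filter_upwards [eventually_gt_atTop (0:ℝ)] with r hr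
  rw [abs_pow, abs_of_pos hr, Real.rpow_natCast, one_mul]

private lemma Ob.id' : Ob (fun r : ℝ => r) 1 := by
  have := Ob.monomial 1
  simp only [pow_one] at this
  exact this.mono (by norm_num)

set_option maxHeartbeats 1000000 in
/-- The key pointwise computation (010) of Lemma 10.1:
u·g^{rr}·f′·√(1+r²)·D⁻¹·(π_rr − k_rr) = −(2u₀ + 𝒜)/r + O(r^{−2+ε}),
where D = (1 + u²((1+r²)f′² + V))^{1/2} and
π = [u(f″ + (r/(1+r²))f′) + 2u′f′]/D. -/
theorem stmt_8 (u₀ 𝒜 mR ε r₀ : ℝ) (hε : ε ∈ Set.Ioo (0 : ℝ) 1) (hr₀ : 0 < r₀)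
    (u u' f f' f'' V G k : ℝ → ℝ)
    (hud : ∀ r ≥ r₀, HasDerivAt u (u' r) r)
    (hfd : ∀ r ≥ r₀, HasDerivAt f (f' r) r)
    (hfd' : ∀ r ≥ r₀, HasDerivAt f' (f'' r) r)
    (hu : ∃ C R, ∀ r ≥ R, |u r - (1 + u₀ / r)| ≤ C * r ^ (-2 + ε))
    (hu' : ∃ C R, ∀ r ≥ R, |u' r - (-u₀ / r ^ 2)| ≤ C * r ^ (-3 + ε))
    (hf' : ∃ C R, ∀ r ≥ R,
      |f' r - (r / Real.sqrt (1 + r ^ 2) + 𝒜 / r)| ≤ C * r ^ (-2 + ε))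
    (hf'' : ∃ C R, ∀ r ≥ R,
      |f'' r - ((1 + r ^ 2) ^ (-(3 : ℝ) / 2) - 𝒜 / r ^ 2)| ≤ C * r ^ (-3 + ε))
    (hV : ∃ C R, ∀ r ≥ R, |V r| ≤ C * r ^ ε)
    (hG : ∃ C R, ∀ r ≥ R, |G r - ((1 + r ^ 2) - mR / r)| ≤ C * r ^ (-2 : ℝ))
    (hk : ∃ C R, ∀ r ≥ R, |k r - (1 + r ^ 2)⁻¹| ≤ C * r ^ (-5 : ℝ)) :
    ∃ C R, ∀ r ≥ R,
      |u r * G r * f' r * Real.sqrt (1 + r ^ 2) *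
          (Real.sqrt (1 + u r ^ 2 * ((1 + r ^ 2) * f' r ^ 2 + V r)))⁻¹ *
          ((u r * (f'' r + (r / (1 + r ^ 2)) * f' r) + 2 * u' r * f' r) /
              Real.sqrt (1 + u r ^ 2 * ((1 + r ^ 2) * f' r ^ 2 + V r)) -
            k r) -
        (-(2 * u₀ + 𝒜) / r)| ≤ C * r ^ (-2 + ε) := by
  obtain ⟨hε0, hε1⟩ := hε
  clear hud hfd hfd' hr₀ f
  -- ## basic facts about s = sqrt (1+r^2)
  have hsq : ∀ r : ℝ, Real.sqrt (1 + r ^ 2) ^ 2 = 1 + r ^ 2 := fun r => Real.sq_sqrt (by positivity)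
  have hspos : ∀ r : ℝ, 0 < Real.sqrt (1 + r ^ 2) := fun r => Real.sqrt_pos.2 (by positivity)
  have hsger : ∀ r : ℝ, 0 ≤ r → r ≤ Real.sqrt (1 + r ^ 2) := by
    intro r hr
    nlinarith [hsq r, hspos r]
  have hsub : ∀ r : ℝ, 1 ≤ r → Real.sqrt (1 + r ^ 2) - r ≤ 1 / r := by
    intro r hr
    have h1 := hsger r (by linarith)
    have h2 := hsq r
    have h3 := hspos r
    rw [le_div_iff₀ (by linarith : (0:ℝ) < r)]
    nlinarith [mul_nonneg (sub_nonneg.2 h1) h3.le]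
  have obs1 : Ob (fun r => Real.sqrt (1 + r ^ 2) - r) (-1) := by
    refine ⟨1, ?_⟩
    filter_upwards [eventually_ge_atTop (1:ℝ)] with r hr
    have hr0 : (0:ℝ) < r := by linarith
    have := hsub r hr
    rw [abs_of_nonneg (by linarith [hsger r hr0.le]), one_mul,
      show (-1:ℝ) = -((1:ℕ):ℝ) by norm_num, rpow_neg_nat hr0, pow_one, ← one_div]
    exact this
  have obsfull : Ob (fun r => Real.sqrt (1 + r ^ 2)) 1 := by
    refine (obs1.mono (by norm_num : (-1:ℝ) ≤ 1)).add Ob.id' |>.congr ?_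
    exact Eventually.of_forall fun r => by ring
  have obsinv : Ob (fun r => (Real.sqrt (1 + r ^ 2))⁻¹ - r⁻¹) (-3) := by
    refine ⟨1, ?_⟩
    filter_upwards [eventually_ge_atTop (1:ℝ)] with r hr
    have hr0 : (0:ℝ) < r := by linarith
    have h1 := hsger r hr0.le
    have h3 := hspos r
    have he : (Real.sqrt (1 + r ^ 2))⁻¹ - r⁻¹ ≤ 0 := by
      simp only [sub_nonpos]
      exact inv_anti₀ hr0 h1
    rw [abs_of_nonpos he, one_mul, show (-3:ℝ) = -((3:ℕ):ℝ) by norm_num, rpow_neg_nat hr0]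
    have heq : r⁻¹ - (Real.sqrt (1 + r ^ 2))⁻¹ = (Real.sqrt (1 + r ^ 2) - r) / (r * Real.sqrt (1 + r ^ 2)) := by
      field_simp
    rw [neg_sub, heq]
    calc (Real.sqrt (1 + r ^ 2) - r) / (r * Real.sqrt (1 + r ^ 2)) ≤ (1/r) / (r * r) := by
          apply div_le_div₀ (by positivity) (hsub r hr) (by positivity)
          exact mul_le_mul_of_nonneg_left h1 hr0.le
      _ = (r ^ 3)⁻¹ := by field_simp
  have obrs1 : Ob (fun r => r / Real.sqrt (1 + r ^ 2) - 1) (-2) := by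
    refine ⟨1, ?_⟩
    filter_upwards [eventually_ge_atTop (1:ℝ)] with r hr
    have hr0 : (0:ℝ) < r := by linarith
    have h1 := hsger r hr0.le
    have h3 := hspos r
    have he : r / Real.sqrt (1 + r ^ 2) - 1 ≤ 0 := by
      rw [sub_nonpos, div_le_one h3]; exact h1
    rw [abs_of_nonpos he, one_mul, show (-2:ℝ) = -((2:ℕ):ℝ) by norm_num, rpow_neg_nat hr0]
    have heq : -(r / Real.sqrt (1 + r ^ 2) - 1) = (Real.sqrt (1 + r ^ 2) - r) / Real.sqrt (1 + r ^ 2) := by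
      field_simp
      ring
    rw [heq]
    calc (Real.sqrt (1 + r ^ 2) - r) / Real.sqrt (1 + r ^ 2) ≤ (1/r) / r :=
          div_le_div₀ (by positivity) (hsub r hr) hr0 h1
      _ = (r ^ 2)⁻¹ := by field_simp
  have obrden : Ob (fun r => r / (1 + r ^ 2)) (-1) := by
    refine ⟨1, ?_⟩
    filter_upwards [eventually_ge_atTop (1:ℝ)] with r hr
    have hr0 : (0:ℝ) < r := by linarith
    rw [abs_of_nonneg (by positivity), one_mul,
      show (-1:ℝ) = -((1:ℕ):ℝ) by norm_num, rpow_neg_nat hr0, pow_one, ← one_div,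
      div_le_div_iff₀ (by positivity) hr0]
    nlinarith
  have obinv2 : Ob (fun r => 1 / r ^ 2 - (1 + r ^ 2)⁻¹) (-4) := by
    refine ⟨1, ?_⟩
    filter_upwards [eventually_ge_atTop (1:ℝ)] with r hr
    have hr0 : (0:ℝ) < r := by linarith
    have heq : 1 / r ^ 2 - (1 + r ^ 2)⁻¹ = 1 / (r ^ 2 * (1 + r ^ 2)) := by
      field_simp
      ring
    rw [heq, abs_of_nonneg (by positivity), one_mul,
      show (-4:ℝ) = -((4:ℕ):ℝ) by norm_num, rpow_neg_nat hr0, ← one_div]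
    apply div_le_div₀ (by positivity) le_rfl (by positivity)
    nlinarith
  have obrinv : Ob (fun r : ℝ => r⁻¹) (-1) := by
    have h := Ob.cdivpow 1 1
    simp only [pow_one, one_div, Nat.cast_one] at h
    exact h
  have obcr : ∀ c : ℝ, Ob (fun r => c / r) (-1) := by
    intro c
    have h := Ob.cdivpow c 1
    simp only [pow_one, Nat.cast_one] at h
    exact h
  -- ## hypotheses as Ob statements
  have obu_e : Ob (fun r => u r - (1 + u₀ / r)) (-2 + ε) := by
    obtain ⟨C, R, h⟩ := hu; exact ⟨C, eventually_atTop.2 ⟨R, h⟩⟩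
  have obu'_e : Ob (fun r => u' r + u₀ / r ^ 2) (-3 + ε) := by
    obtain ⟨C, R, h⟩ := hu'
    exact Ob.congr ⟨C, eventually_atTop.2 ⟨R, h⟩⟩ (Eventually.of_forall fun r => by ring)
  have obf_e : Ob (fun r => f' r - (r / Real.sqrt (1 + r ^ 2) + 𝒜 / r)) (-2 + ε) := by
    obtain ⟨C, R, h⟩ := hf'; exact ⟨C, eventually_atTop.2 ⟨R, h⟩⟩
  have obf''_e : Ob (fun r => f'' r - ((1 + r ^ 2) ^ (-(3 : ℝ) / 2) - 𝒜 / r ^ 2)) (-3 + ε) := by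
    obtain ⟨C, R, h⟩ := hf''; exact ⟨C, eventually_atTop.2 ⟨R, h⟩⟩
  have obV : Ob V ε := by
    obtain ⟨C, R, h⟩ := hV; exact ⟨C, eventually_atTop.2 ⟨R, h⟩⟩
  have obG_e : Ob (fun r => G r - ((1 + r ^ 2) - mR / r)) (-2) := by
    obtain ⟨C, R, h⟩ := hG; exact ⟨C, eventually_atTop.2 ⟨R, h⟩⟩
  have obk_e : Ob (fun r => k r - (1 + r ^ 2)⁻¹) (-5) := by
    obtain ⟨C, R, h⟩ := hk; exact ⟨C, eventually_atTop.2 ⟨R, h⟩⟩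
  -- ## derived simple bounds
  have ob1u : Ob (fun r => 1 + u₀ / r) 0 :=
    (Ob.const 1).add ((obcr u₀).mono (by norm_num))
  have obuB : Ob u 0 := by
    refine ((obu_e.mono (by linarith)).add ob1u).congr ?_
    exact Eventually.of_forall fun r => by ring
  have obu1 : Ob (fun r => u r - 1) (-1) := by
    refine ((obu_e.mono (by linarith)).add (obcr u₀)).congr ?_
    exact Eventually.of_forall fun r => by ring
  have obf'1 : Ob (fun r => f' r - 1) (-1) := by
    refine (((obf_e.mono (by linarith)).add (obrs1.mono (by norm_num))).add
      (obcr 𝒜)).congr ?_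
    exact Eventually.of_forall fun r => by ring
  have obf'B : Ob f' 0 := by
    refine ((obf'1.mono (by norm_num)).add (Ob.const 1)).congr ?_
    exact Eventually.of_forall fun r => by ring
  have obG2 : Ob (fun r => G r - r ^ 2) 0 := by
    refine (((obG_e.mono (by norm_num)).add (Ob.const 1)).add
      ((obcr (-mR)).mono (by norm_num))).congr ?_
    exact Eventually.of_forall fun r => by ring
  have obGB : Ob G 2 := by
    refine ((obG2.mono (by norm_num)).add ((Ob.monomial 2).mono (by norm_num))).congr ?_
    exact Eventually.of_forall fun r => by ring
  -- ## the rpow identity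
  have hrpow : ∀ r : ℝ, (1 + r ^ 2 : ℝ) ^ (-(3 : ℝ) / 2) = ((1 + r ^ 2) * Real.sqrt (1 + r ^ 2))⁻¹ := by
    intro r
    have h : (0:ℝ) < 1 + r ^ 2 := by positivity
    rw [show (-(3:ℝ) / 2) = -(3/2) by ring, Real.rpow_neg h.le]
    congr 1
    rw [show (3:ℝ)/2 = 1 + 1/2 by norm_num, Real.rpow_add h, Real.rpow_one,
      ← Real.sqrt_eq_rpow]
  -- ## step W : f'' + (r/(1+r^2)) f' = 1/r + O(r^(-3+ε))
  have obB : Ob (fun r => (1 + r ^ 2 : ℝ) ^ (-(3 : ℝ) / 2)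
      + (r / (1 + r ^ 2)) * (r / Real.sqrt (1 + r ^ 2)) - r⁻¹) (-3) := by
    refine obsinv.congr ?_
    filter_upwards [eventually_ge_atTop (1:ℝ)] with r hr
    have hr0 : (0:ℝ) < r := by linarith
    have h3 := hspos r
    have h : (0:ℝ) < 1 + r ^ 2 := by positivity
    rw [hrpow r]
    field_simp
  have obW : Ob (fun r => (f'' r + (r / (1 + r ^ 2)) * f' r) - r⁻¹) (-3 + ε) := by
    refine ((((obf''_e.add ((obrden.mul obf_e).mono (by linarith))).add
      (obB.mono (by linarith))).sub
      (((Ob.const 𝒜).mul obinv2).mono (by linarith))).congr ?_)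
    filter_upwards [eventually_ge_atTop (1:ℝ)] with r hr
    have hr0 : (0:ℝ) < r := by linarith
    have hx : r / (1 + r ^ 2) * (𝒜 / r) = 𝒜 / (1 + r ^ 2) := by
      field_simp
    linear_combination -hx
  have obWB : Ob (fun r => (f'' r + (r / (1 + r ^ 2)) * f' r)) (-1) := by
    refine ((obW.mono (by linarith)).add obrinv).congr ?_
    exact Eventually.of_forall fun r => by ring
  -- ## step N
  have obN : Ob (fun r => (u r * (f'' r + (r / (1 + r ^ 2)) * f' r) + 2 * u' r * f' r) - (r⁻¹ - u₀ / r ^ 2)) (-3 + ε) := by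
    have t1 := (obu_e.mul obWB).mono (by linarith : (-2 + ε) + (-1) ≤ -3 + ε)
    have t2 := (ob1u.mul obW).mono (by linarith : (0:ℝ) + (-3 + ε) ≤ -3 + ε)
    have t3 := ((Ob.const 2).mul (obu'_e.mul obf'B)).mono
      (by linarith : (0:ℝ) + ((-3 + ε) + 0) ≤ -3 + ε)
    have t4 := ((Ob.cdivpow (2 * u₀) 2).mul obf'1).mono
      (by push_cast; linarith : (-((2:ℕ):ℝ)) + (-1) ≤ -3 + ε)
    refine (((t1.add t2).add t3).sub t4).congr ?_
    exact Eventually.of_forall fun r => by ring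
  -- ## step sf' and w = u s f'
  have obsf : Ob (fun r => Real.sqrt (1 + r ^ 2) * f' r - (r + 𝒜)) (-1 + ε) := by
    have t1 := (obsfull.mul obf_e).mono (by linarith : (1:ℝ) + (-2 + ε) ≤ -1 + ε)
    have t2a : Ob (fun r => 𝒜 * (Real.sqrt (1 + r ^ 2) - r)) (-1) :=
      ((Ob.const 𝒜).mul obs1).mono (by norm_num)
    have t2 : Ob (fun r => 𝒜 * (Real.sqrt (1 + r ^ 2) - r) / r) (-2) :=
      t2a.mono (by norm_num : (-1:ℝ) ≤ -2 + 1) |>.div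
        (by filter_upwards [eventually_ge_atTop (0:ℝ)] with r hr; linarith)
    refine (t1.add (t2.mono (by linarith))).congr ?_
    filter_upwards [eventually_ge_atTop (1:ℝ)] with r hr
    have hr0 : (0:ℝ) < r := by linarith
    have h3 := hspos r
    field_simp
    ring
  have obsfB : Ob (fun r => Real.sqrt (1 + r ^ 2) * f' r) 1 := by
    refine ((obsf.mono (by linarith)).add
      ((Ob.id'.add ((Ob.const 𝒜).mono (by norm_num) : Ob (fun _ => 𝒜) 1)).congr
        (Eventually.of_forall fun r => rfl))).congr ?_
    exact Eventually.of_forall fun r => by ring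
  have obw : Ob (fun r => u r * (Real.sqrt (1 + r ^ 2) * f' r) - (r + (𝒜 + u₀))) (-1 + ε) := by
    have t1 := (obu_e.mul obsfB).mono (by linarith : (-2 + ε) + 1 ≤ -1 + ε)
    have t2 := (ob1u.mul obsf).mono (by linarith : (0:ℝ) + (-1 + ε) ≤ -1 + ε)
    have t3 := (obcr (u₀ * 𝒜)).mono (by linarith : (-1:ℝ) ≤ -1 + ε)
    refine ((t1.add t2).add t3).congr ?_
    filter_upwards [eventually_ge_atTop (1:ℝ)] with r hr
    have hr0 : (0:ℝ) < r := by linarith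
    field_simp
    ring
  have obwB : Ob (fun r => u r * (Real.sqrt (1 + r ^ 2) * f' r) + (r + (𝒜 + u₀))) 1 := by
    have t1 := obw.mono (by linarith : (-1 + ε) ≤ 1)
    have t2 : Ob (fun r => 2 * (r + (𝒜 + u₀))) 1 := by
      refine (((Ob.const 2).mul Ob.id').mono (by norm_num)).add
        ((Ob.const (2 * (𝒜 + u₀))).mono (by norm_num)) |>.congr ?_
      exact Eventually.of_forall fun r => by ring
    refine (t1.add t2).congr ?_
    exact Eventually.of_forall fun r => by ring
  -- ## step A = D^2
  have obA : Ob (fun r => (1 + u r ^ 2 * ((1 + r ^ 2) * f' r ^ 2 + V r)) - (r ^ 2 + 2 * (𝒜 + u₀) * r)) ε := by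
    have t1 := (Ob.const 1).mono (le_of_lt hε0)
    have t2 := ((obuB.mul obuB).mul obV).mono (by linarith : ((0:ℝ) + 0) + ε ≤ ε)
    have t3 := (obw.mul obwB).mono (by linarith : (-1 + ε) + 1 ≤ ε)
    have t4 := (Ob.const ((𝒜 + u₀) ^ 2)).mono (le_of_lt hε0)
    refine (((t1.add t2).add t3).add t4).congr ?_
    refine Eventually.of_forall fun r => ?_
    have h2 := hsq r
    linear_combination (u r ^ 2 * f' r ^ 2) * h2
  have hAlow : ∀ᶠ r : ℝ in atTop, r ^ 2 / 2 ≤ (1 + u r ^ 2 * ((1 + r ^ 2) * f' r ^ 2 + V r)) := by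
    obtain ⟨c, hc0, hc⟩ := obA.bound
    filter_upwards [hc, eventually_ge_atTop (max 1 (4 * (|𝒜 + u₀| + c + 1)))] with r h1 hr
    have hr1 : (1:ℝ) ≤ r := le_trans (le_max_left _ _) hr
    have hr2 : 4 * (|𝒜 + u₀| + c + 1) ≤ r := le_trans (le_max_right _ _) hr
    have hre : r ^ ε ≤ r := by
      calc r ^ ε ≤ r ^ (1:ℝ) := Real.rpow_le_rpow_of_exponent_le hr1 hε1.le
        _ = r := Real.rpow_one r
    have habs := abs_le.1 h1
    nlinarith [habs.1, mul_nonneg hc0 (sub_nonneg.2 hre), le_abs_self (𝒜 + u₀),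
      neg_abs_le (𝒜 + u₀), abs_nonneg (𝒜 + u₀),
      mul_le_mul_of_nonneg_right (neg_abs_le (𝒜 + u₀)) (by linarith : (0:ℝ) ≤ r)]
  have hDlow : ∀ᶠ r : ℝ in atTop, r / 2 ≤ Real.sqrt (1 + u r ^ 2 * ((1 + r ^ 2) * f' r ^ 2 + V r)) := by
    filter_upwards [hAlow, eventually_ge_atTop (0:ℝ)] with r h1 hr
    have h2 : (r / 2) ^ 2 ≤ (1 + u r ^ 2 * ((1 + r ^ 2) * f' r ^ 2 + V r)) := by nlinarith
    calc r / 2 = Real.sqrt ((r / 2) ^ 2) := (Real.sqrt_sq (by linarith)).symm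
      _ ≤ Real.sqrt (1 + u r ^ 2 * ((1 + r ^ 2) * f' r ^ 2 + V r)) := Real.sqrt_le_sqrt h2
  have hDsq : ∀ᶠ r : ℝ in atTop, (Real.sqrt (1 + u r ^ 2 * ((1 + r ^ 2) * f' r ^ 2 + V r))) ^ 2 = (1 + u r ^ 2 * ((1 + r ^ 2) * f' r ^ 2 + V r)) := by
    filter_upwards [hAlow, eventually_ge_atTop (0:ℝ)] with r h1 hr
    exact Real.sq_sqrt (by nlinarith)
  have obD : Ob (fun r => Real.sqrt (1 + u r ^ 2 * ((1 + r ^ 2) * f' r ^ 2 + V r)) - (r + (𝒜 + u₀))) (-1 + ε) := by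
    have obF : Ob (fun r => (1 + u r ^ 2 * ((1 + r ^ 2) * f' r ^ 2 + V r)) - (r ^ 2 + 2 * (𝒜 + u₀) * r) - (𝒜 + u₀) ^ 2) ((-1 + ε) + 1) :=
      (obA.sub ((Ob.const ((𝒜 + u₀) ^ 2)).mono (le_of_lt hε0))).mono (by linarith)
    have hE : ∀ᶠ r : ℝ in atTop, r / 2 ≤ Real.sqrt (1 + u r ^ 2 * ((1 + r ^ 2) * f' r ^ 2 + V r)) + (r + (𝒜 + u₀)) := by
      filter_upwards [hDlow, eventually_ge_atTop (max 0 (-(𝒜 + u₀)))] with r h1 hr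
      have := le_trans (le_max_right _ _) hr
      have := le_trans (le_max_left _ _) hr
      linarith
    refine (obF.div hE).congr ?_
    filter_upwards [hDsq, hE, eventually_gt_atTop (0:ℝ)] with r h1 h2 hr
    have hE0 : (0:ℝ) < Real.sqrt (1 + u r ^ 2 * ((1 + r ^ 2) * f' r ^ 2 + V r)) + (r + (𝒜 + u₀)) := by linarith
    rw [div_eq_iff hE0.ne']
    linear_combination -h1
  have obDB : Ob (fun r => Real.sqrt (1 + u r ^ 2 * ((1 + r ^ 2) * f' r ^ 2 + V r))) 1 := by
    have t2 : Ob (fun r => r + (𝒜 + u₀)) 1 :=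
      (Ob.id'.add ((Ob.const (𝒜 + u₀)).mono (by norm_num))).congr
        (Eventually.of_forall fun r => rfl)
    refine ((obD.mono (by linarith)).add t2).congr ?_
    exact Eventually.of_forall fun r => by ring
  -- ## step pi = N/D
  have obY : Ob (fun r => (u r * (f'' r + (r / (1 + r ^ 2)) * f' r) + 2 * u' r * f' r) - (1 / r ^ 2 - (2 * u₀ + 𝒜) / r ^ 3) * Real.sqrt (1 + u r ^ 2 * ((1 + r ^ 2) * f' r ^ 2 + V r))) ((-4 + ε) + 1) := by
    have t1 := obN
    have t2 := (Ob.cdivpow ((𝒜 + u₀) * (2 * u₀ + 𝒜)) 3).mono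
      (by push_cast; linarith : -((3:ℕ):ℝ) ≤ -3 + ε)
    have obM : Ob (fun r => 1 / r ^ 2 - (2 * u₀ + 𝒜) / r ^ 3) (-2) :=
      ((Ob.cdivpow 1 2).mono (by push_cast; norm_num)).sub
        ((Ob.cdivpow (2 * u₀ + 𝒜) 3).mono (by push_cast; norm_num))
    have t3 := (obM.mul obD).mono (by linarith : (-2:ℝ) + (-1 + ε) ≤ -3 + ε)
    refine (((t1.add t2).sub t3).mono (by linarith)).congr ?_
    filter_upwards [eventually_ge_atTop (1:ℝ)] with r hr
    have hr0 : (0:ℝ) < r := by linarith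
    have hM : (1 / r ^ 2 - (2 * u₀ + 𝒜) / r ^ 3) * (r + (𝒜 + u₀))
        = 1 / r - u₀ / r ^ 2 - ((𝒜 + u₀) * (2 * u₀ + 𝒜)) / r ^ 3 := by
      field_simp
      ring
    linear_combination hM
  have obpi : Ob (fun r => (u r * (f'' r + (r / (1 + r ^ 2)) * f' r) + 2 * u' r * f' r) / Real.sqrt (1 + u r ^ 2 * ((1 + r ^ 2) * f' r ^ 2 + V r)) - (1 / r ^ 2 - (2 * u₀ + 𝒜) / r ^ 3)) (-4 + ε) := by
    refine (obY.div hDlow).congr ?_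
    filter_upwards [hDlow, eventually_gt_atTop (0:ℝ)] with r h1 hr
    have hD0 : (0:ℝ) < Real.sqrt (1 + u r ^ 2 * ((1 + r ^ 2) * f' r ^ 2 + V r)) := by linarith
    rw [sub_div, mul_div_cancel_right₀ _ hD0.ne']
  -- ## pi - k + b/r^3
  have obpk : Ob (fun r => (u r * (f'' r + (r / (1 + r ^ 2)) * f' r) + 2 * u' r * f' r) / Real.sqrt (1 + u r ^ 2 * ((1 + r ^ 2) * f' r ^ 2 + V r)) - k r + (2 * u₀ + 𝒜) / r ^ 3) (-4 + ε) := by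
    have t2 := obinv2.mono (by linarith : (-4:ℝ) ≤ -4 + ε)
    have t3 := obk_e.mono (by linarith : (-5:ℝ) ≤ -4 + ε)
    refine ((obpi.add t2).sub t3).congr ?_
    exact Eventually.of_forall fun r => by ring
  -- ## prefactor
  have obP3 : Ob (fun r => (u r * G r * f' r * Real.sqrt (1 + r ^ 2)) - r ^ 3) 2 := by
    have t1 := (((obu1.mul obGB).mul obf'B).mul obsfull).mono
      (by push_cast; linarith : (((-1:ℝ) + ((2:ℕ):ℝ)) + 0) + 1 ≤ 2)
    have t2 := ((obG2.mul obf'B).mul obsfull).mono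
      (by norm_num : (((0:ℝ) + 0) + 1 : ℝ) ≤ 2)
    have t3 := (((Ob.monomial 2).mul obf'1).mul obsfull).mono
      (by push_cast; linarith : ((((2:ℕ):ℝ) + (-1)) + 1 : ℝ) ≤ 2)
    have t4 := ((Ob.monomial 2).mul obs1).mono
      (by push_cast; linarith : (((2:ℕ):ℝ) + (-1) : ℝ) ≤ 2)
    refine (((t1.add t2).add t3).add t4).congr ?_
    exact Eventually.of_forall fun r => by ring
  have obZ : Ob (fun r => (u r * G r * f' r * Real.sqrt (1 + r ^ 2)) - r ^ 2 * Real.sqrt (1 + u r ^ 2 * ((1 + r ^ 2) * f' r ^ 2 + V r))) (1 + 1) := by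
    have t2 := ((Ob.monomial 2).mul obD).mono
      (by push_cast; linarith : ((2:ℕ):ℝ) + (-1 + ε) ≤ 2)
    have t3 := ((Ob.const (𝒜 + u₀)).mul (Ob.monomial 2)).mono
      (by push_cast; linarith : (0:ℝ) + ((2:ℕ):ℝ) ≤ 2)
    refine (((obP3.sub t2).sub t3).mono (by norm_num)).congr ?_
    exact Eventually.of_forall fun r => by ring
  have obP : Ob (fun r => (u r * G r * f' r * Real.sqrt (1 + r ^ 2)) / Real.sqrt (1 + u r ^ 2 * ((1 + r ^ 2) * f' r ^ 2 + V r)) - r ^ 2) 1 := by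
    refine (obZ.div hDlow).congr ?_
    filter_upwards [hDlow, eventually_gt_atTop (0:ℝ)] with r h1 hr
    have hD0 : (0:ℝ) < Real.sqrt (1 + u r ^ 2 * ((1 + r ^ 2) * f' r ^ 2 + V r)) := by linarith
    rw [sub_div, mul_div_cancel_right₀ _ hD0.ne']
  have obPB : Ob (fun r => (u r * G r * f' r * Real.sqrt (1 + r ^ 2)) / Real.sqrt (1 + u r ^ 2 * ((1 + r ^ 2) * f' r ^ 2 + V r))) 2 := by
    refine ((obP.mono (by norm_num)).add ((Ob.monomial 2).mono (by push_cast; norm_num))).congr ?_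
    exact Eventually.of_forall fun r => by ring
  -- ## final assembly
  have final : Ob (fun r => u r * G r * f' r * Real.sqrt (1 + r ^ 2) * (Real.sqrt (1 + u r ^ 2 * ((1 + r ^ 2) * f' r ^ 2 + V r)))⁻¹ * ((u r * (f'' r + (r / (1 + r ^ 2)) * f' r) + 2 * u' r * f' r) / Real.sqrt (1 + u r ^ 2 * ((1 + r ^ 2) * f' r ^ 2 + V r)) - k r)
      - (-(2 * u₀ + 𝒜) / r)) (-2 + ε) := by
    have t1 := (obPB.mul obpk).mono (by linarith : (2:ℝ) + (-4 + ε) ≤ -2 + ε)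
    have t2 := ((Ob.cdivpow (2 * u₀ + 𝒜) 3).mul obP).mono
      (by push_cast; linarith : -((3:ℕ):ℝ) + 1 ≤ -2 + ε)
    refine (t1.sub t2).congr ?_
    filter_upwards [hDlow, eventually_ge_atTop (1:ℝ)] with r h1 hr
    have hr0 : (0:ℝ) < r := by linarith
    have hrr : (2 * u₀ + 𝒜) * r ^ 2 / r ^ 3 = (2 * u₀ + 𝒜) / r := by
      field_simp
    linear_combination hrr
  obtain ⟨c, hc⟩ := final
  rw [eventually_atTop] at hc
  obtain ⟨R, hR⟩ := hc
  exact ⟨c, R, hR⟩
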